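/- arXiv:0903.4696 — 2 statements merged into one kernel-verified Lean document; each statement's English description precedes it below -/
import Mathlib

section
/- Let r, ε > 0 and κ = 2√(2rε+ε²). Let l₁ = {(t, 0, 0) : t ∈ ℝ} and l₂ = {(t, λ, 0) : t ∈ ℝ} be parallel lines in ℝ³ with λ > κ. If p ∈ ℝ³ is equidistant from l₁ and l₂ and has nonnegative third coordinate, then the point p + (0,0,r) has distance strictly greater than r + ε from l₁ (and from l₂). -/
open Metric Set

lemma line_infDist (a : ℝ) (p : EuclideanSpace ℝ (Fin 3)) :
    Metric.infDist p {q : EuclideanSpace ℝ (Fin 3) | q 1 = a ∧ q 2 = 0}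
      = Real.sqrt ((p 1 - a) ^ 2 + (p 2) ^ 2) := by
  set q : EuclideanSpace ℝ (Fin 3) := !₂[p 0, a, 0] with hq
  have hqmem : q ∈ {q : EuclideanSpace ℝ (Fin 3) | q 1 = a ∧ q 2 = 0} := by
    constructor <;> simp [hq]
  have hdist : dist p q = Real.sqrt ((p 1 - a) ^ 2 + (p 2) ^ 2) := by
    rw [EuclideanSpace.dist_eq, Fin.sum_univ_three]
    simp [hq, Real.dist_eq, sq_abs]
  apply le_antisymm
  · calc Metric.infDist p _ ≤ dist p q := Metric.infDist_le_dist_of_mem hqmem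
    _ = _ := hdist
  · by_contra h
    push_neg at h
    obtain ⟨y, ⟨h1, h2⟩, hlt⟩ := (Metric.infDist_lt_iff ⟨q, hqmem⟩).1 h
    have : Real.sqrt ((p 1 - a) ^ 2 + (p 2) ^ 2) ≤ dist p y := by
      rw [EuclideanSpace.dist_eq, Fin.sum_univ_three, h1, h2]
      apply Real.sqrt_le_sqrt
      have := sq_nonneg (dist (p 0) (y 0))
      have h12 : dist (p 1) a ^ 2 = (p 1 - a) ^ 2 := by rw [Real.dist_eq, sq_abs]
      have h22 : dist (p 2) 0 ^ 2 = (p 2) ^ 2 := by rw [Real.dist_eq, sq_abs]; ring_nf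
      linarith
    linarith

theorem cannot_pass_between_corridors (r ε κ lam : ℝ) (hr : 0 < r) (hε : 0 < ε)
    (hκ : κ = 2 * Real.sqrt (2 * r * ε + ε ^ 2)) (hlam : κ < lam)
    (l₁ l₂ : Set (EuclideanSpace ℝ (Fin 3)))
    (hl₁ : l₁ = {q | q 1 = 0 ∧ q 2 = 0})
    (hl₂ : l₂ = {q | q 1 = lam ∧ q 2 = 0})
    (p : EuclideanSpace ℝ (Fin 3))
    (hequi : Metric.infDist p l₁ = Metric.infDist p l₂)
    (hp : 0 ≤ p 2)
    (p' : EuclideanSpace ℝ (Fin 3))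
    (hp' : p' = fun i => p i + if i = 2 then r else 0) :
    r + ε < Metric.infDist p' l₁ ∧ r + ε < Metric.infDist p' l₂ := by
  have hκ0 : 0 ≤ κ := by
    rw [hκ]; positivity
  have hκsq : κ ^ 2 = 4 * (2 * r * ε + ε ^ 2) := by
    rw [hκ, mul_pow, Real.sq_sqrt (by positivity)]; ring
  subst hl₁ hl₂
  rw [line_infDist, line_infDist] at hequi
  have hmid : p 1 = lam / 2 := by
    have h := congrArg (· ^ 2) hequi
    simp only [Real.sq_sqrt (by positivity : (0:ℝ) ≤ (p 1 - 0) ^ 2 + (p 2) ^ 2),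
      Real.sq_sqrt (by positivity : (0:ℝ) ≤ (p 1 - lam) ^ 2 + (p 2) ^ 2)] at h
    have hlam0 : 0 < lam := lt_of_le_of_lt hκ0 hlam
    nlinarith
  have hp'1 : p' 1 = lam / 2 := by rw [hp']; simp [hmid]
  have hp'2 : p' 2 = p 2 + r := by rw [hp']; simp
  have key : ∀ a : ℝ, (p' 1 - a) ^ 2 = (lam / 2) ^ 2 → r + ε < Real.sqrt ((p' 1 - a) ^ 2 + (p' 2) ^ 2) := by
    intro a ha
    rw [ha, hp'2]
    rw [show r + ε = Real.sqrt ((r + ε) ^ 2) from (Real.sqrt_sq (by positivity)).symm]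
    apply Real.sqrt_lt_sqrt (by positivity)
    nlinarith [sq_nonneg (p 2), mul_nonneg hp hr.le]
  rw [line_infDist, line_infDist]
  refine ⟨key 0 (by rw [hp'1]; ring), key lam (by rw [hp'1]; ring)⟩
end

section
/- Let x, y ∈ ℝⁿ with ‖x − y‖ ≤ κ, where κ = 2√(2rε + ε²) for r, ε > 0. Then the closed r-neighborhood of the segment [x,y] is contained in the union of the closed balls of radius r+ε centered at x and at y: N̄_r([x,y]) ⊆ B̄(x, r+ε) ∪ B̄(y, r+ε). Consequently, if a ball of radius r+ε can occupy either endpoint without touching an obstacle set O, a ball of radius r can move along the straight segment from x to y without touching O. -/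
set_option maxHeartbeats 800000


open Metric Set

lemma seg_compact {E : Type*} [NormedAddCommGroup E] [NormedSpace ℝ E] (x y : E) :
    IsCompact (segment ℝ x y) := by
  rw [segment_eq_image]
  exact isCompact_Icc.image (by fun_prop)

lemma min_sq_le {E : Type*} [NormedAddCommGroup E] [InnerProductSpace ℝ E]
    (w x y : E) (a b : ℝ) (ha : 0 ≤ a) (hb : 0 ≤ b) (hab : a + b = 1) :
    min (‖w - x‖ ^ 2) (‖w - y‖ ^ 2) ≤ ‖w - (a • x + b • y)‖ ^ 2 + a * b * ‖x - y‖ ^ 2 := by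
  have h1 : w - (a • x + b • y) = a • (w - x) + b • (w - y) := by
    have hw' : a • w + b • w = w := by rw [← add_smul, hab, one_smul]
    rw [smul_sub, smul_sub]
    rw [show a • w - a • x + (b • w - b • y) = (a • w + b • w) - (a • x + b • y) by abel, hw']
  have h2 : x - y = (w - y) - (w - x) := by abel
  have e1 : ‖a • (w - x) + b • (w - y)‖ ^ 2 =
      a ^ 2 * ‖w - x‖ ^ 2 + b ^ 2 * ‖w - y‖ ^ 2
        + 2 * (a * b) * inner ℝ (w - x) (w - y) := by
    rw [norm_add_sq_real, norm_smul, norm_smul, real_inner_smul_left, real_inner_smul_right]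
    simp [Real.norm_eq_abs, abs_of_nonneg ha, abs_of_nonneg hb]
    ring
  have e2 : ‖(w - y) - (w - x)‖ ^ 2 =
      ‖w - y‖ ^ 2 + ‖w - x‖ ^ 2 - 2 * inner ℝ (w - x) (w - y) := by
    rw [norm_sub_sq_real, real_inner_comm]; ring
  rw [h1, h2, e1, e2]
  rcases min_le_iff.mpr (Or.inl (le_refl (‖w - x‖ ^ 2))) with _
  have hmin : min (‖w - x‖ ^ 2) (‖w - y‖ ^ 2) ≤ a * ‖w - x‖ ^ 2 + b * ‖w - y‖ ^ 2 := by
    rcases min_cases (‖w - x‖ ^ 2) (‖w - y‖ ^ 2) with ⟨h, h'⟩ | ⟨h, h'⟩ <;> rw [h] <;> nlinarith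
  nlinarith [hmin]

theorem segment_neighborhood_in_endpoint_balls (n : ℕ) (r ε κ : ℝ) (hr : 0 < r) (hε : 0 < ε)
    (hκ : κ = 2 * Real.sqrt (2 * r * ε + ε ^ 2))
    (x y : EuclideanSpace ℝ (Fin n)) (hxy : ‖x - y‖ ≤ κ) :
    {w | Metric.infDist w (segment ℝ x y) ≤ r} ⊆
      Metric.closedBall x (r + ε) ∪ Metric.closedBall y (r + ε) ∧
    ∀ O : Set (EuclideanSpace ℝ (Fin n)),
      Metric.closedBall x (r + ε) ∩ O = ∅ →
      Metric.closedBall y (r + ε) ∩ O = ∅ →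
      ∀ z ∈ segment ℝ x y, Metric.closedBall z r ∩ O = ∅ := by
  have hκ0 : 0 ≤ κ := by
    rw [hκ]; positivity
  have hκsq : κ ^ 2 = 4 * (2 * r * ε + ε ^ 2) := by
    rw [hκ, mul_pow, Real.sq_sqrt (by positivity)]; ring
  have hmain : {w | Metric.infDist w (segment ℝ x y) ≤ r} ⊆
      Metric.closedBall x (r + ε) ∪ Metric.closedBall y (r + ε) := by
    intro w hw
    simp only [Set.mem_setOf_eq] at hw
    obtain ⟨p, hp, hpd⟩ := (seg_compact x y).exists_infDist_eq_dist
      ⟨x, left_mem_segment ℝ x y⟩ w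
    obtain ⟨a, b, ha, hb, hab, hpab⟩ := hp
    have hwp : ‖w - p‖ ≤ r := by
      rw [← dist_eq_norm, ← hpd]; exact hw
    have hkey := min_sq_le w x y a b ha hb hab
    rw [hpab] at hkey
    have hab4 : a * b ≤ 1 / 4 := by nlinarith [sq_nonneg (a - b)]
    have hxy2 : ‖x - y‖ ^ 2 ≤ κ ^ 2 := by
      have := norm_nonneg (x - y); nlinarith
    have hbound : min (‖w - x‖ ^ 2) (‖w - y‖ ^ 2) ≤ (r + ε) ^ 2 := by
      have h1 : ‖w - p‖ ^ 2 ≤ r ^ 2 := by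
        have := norm_nonneg (w - p); nlinarith
      have h2 : a * b * ‖x - y‖ ^ 2 ≤ 2 * r * ε + ε ^ 2 := by
        have hnn : 0 ≤ ‖x - y‖ ^ 2 := by positivity
        calc a * b * ‖x - y‖ ^ 2 ≤ (1/4) * ‖x - y‖ ^ 2 := by nlinarith
          _ ≤ (1/4) * κ ^ 2 := by nlinarith
          _ = 2 * r * ε + ε ^ 2 := by rw [hκsq]; ring
      calc min (‖w - x‖ ^ 2) (‖w - y‖ ^ 2) ≤ ‖w - p‖ ^ 2 + a * b * ‖x - y‖ ^ 2 := hkey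
        _ ≤ r ^ 2 + (2 * r * ε + ε ^ 2) := by linarith
        _ = (r + ε) ^ 2 := by ring
    rcases min_cases (‖w - x‖ ^ 2) (‖w - y‖ ^ 2) with ⟨h, _⟩ | ⟨h, _⟩
    · left
      rw [mem_closedBall, dist_eq_norm]
      rw [h] at hbound
      nlinarith [norm_nonneg (w - x)]
    · right
      rw [mem_closedBall, dist_eq_norm]
      rw [h] at hbound
      nlinarith [norm_nonneg (w - y)]
  refine ⟨hmain, ?_⟩
  intro O hx hy z hz
  rw [Set.eq_empty_iff_forall_notMem]
  rintro w ⟨hwz, hwO⟩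
  have hw : Metric.infDist w (segment ℝ x y) ≤ r :=
    le_trans (Metric.infDist_le_dist_of_mem hz) hwz
  rcases hmain hw with h | h
  · exact Set.eq_empty_iff_forall_notMem.mp hx w ⟨h, hwO⟩
  · exact Set.eq_empty_iff_forall_notMem.mp hy w ⟨h, hwO⟩
end
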